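/- Let H be a real Hilbert space, P ⊆ ℝⁿ open, f : P → H a C² map, and h₀ ∈ P a point at which the vectors ∂_{h_1} f(h₀), …, ∂_{h_n} f(h₀) are linearly independent. Then there exist ε > 0 and a convex open neighborhood U ⊆ P of h₀ such that for every u ∈ H with ‖u − f(h₀)‖ < ε, the function Φ_u : U → ℝ, Φ_u(h) = ½‖u − f(h)‖², is strictly convex on U; in particular Φ_u has at most one local minimum point in U. -/

import Mathlib

open Set
open scoped RealInnerProductSpace

/-- If `f : P → H` is `C²` and the first partial derivatives
of `f` at `h₀ ∈ P` are linearly independent, then there are `ε > 0` and a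
convex open neighborhood `U ⊆ P` of `h₀` such that for every `u` with
`‖u − f(h₀)‖ < ε` the squared-distance functional `Φ_u(h) = ½‖u − f(h)‖²` is
strictly convex on `U`; in particular it has at most one local minimum point
in `U`. -/
theorem stmt13
    {H : Type*} [NormedAddCommGroup H] [InnerProductSpace ℝ H]
    {n : ℕ} (P : Set (EuclideanSpace ℝ (Fin n))) (hP : IsOpen P)
    (f : EuclideanSpace ℝ (Fin n) → H) (hf : ContDiffOn ℝ 2 f P)
    (h₀ : EuclideanSpace ℝ (Fin n)) (hh₀ : h₀ ∈ P)
    (hind : LinearIndependent ℝ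
      (fun j : Fin n => fderiv ℝ f h₀ (EuclideanSpace.single j 1))) :
    ∃ ε > 0, ∃ U : Set (EuclideanSpace ℝ (Fin n)),
      IsOpen U ∧ Convex ℝ U ∧ U ⊆ P ∧ h₀ ∈ U ∧
      ∀ u : H, ‖u - f h₀‖ < ε →
        StrictConvexOn ℝ U (fun h => (1 / 2 : ℝ) * ‖u - f h‖ ^ 2) ∧
        ∀ h₁ ∈ U, ∀ h₂ ∈ U,
          IsLocalMinOn (fun h => (1 / 2 : ℝ) * ‖u - f h‖ ^ 2) U h₁ →
          IsLocalMinOn (fun h => (1 / 2 : ℝ) * ‖u - f h‖ ^ 2) U h₂ →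
          h₁ = h₂ := by
  classical
  set T := fderiv ℝ f h₀ with hTdef
  -- Step 1 : a coercivity constant for T
  have hTinj : Function.Injective (T : EuclideanSpace ℝ (Fin n) →ₗ[ℝ] H) := by
    rw [injective_iff_map_eq_zero]
    intro z hz
    have hrepr : (∑ i, z i • EuclideanSpace.single i (1:ℝ)) = z := by
      have := Module.Basis.sum_repr (EuclideanSpace.basisFun (Fin n) ℝ).toBasis z
      simpa [OrthonormalBasis.coe_toBasis, OrthonormalBasis.coe_toBasis_repr_apply,
        EuclideanSpace.basisFun_repr, EuclideanSpace.basisFun_apply] using this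
    have hsum : ∑ i, z i • T (EuclideanSpace.single i (1:ℝ)) = 0 := by
      calc ∑ i, z i • T (EuclideanSpace.single i (1:ℝ))
          = T (∑ i, z i • EuclideanSpace.single i (1:ℝ)) := by
            rw [map_sum]; simp [map_smul]
        _ = 0 := by rw [hrepr]; exact hz
    have := Fintype.linearIndependent_iff.mp hind z hsum
    ext i
    simpa using this i
  obtain ⟨K, hK0, hKa⟩ := (LinearMap.injective_iff_antilipschitz _).mp hTinj
  set c : ℝ := (K:ℝ)⁻¹ with hcdef
  have hc0 : 0 < c := by positivity
  have hTlow : ∀ z, c * ‖z‖ ≤ ‖T z‖ := by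
    intro z
    have := hKa.mul_le_dist z 0
    simpa [dist_eq_norm] using this
  -- Step 2 : regularity of the derivatives on P
  have hf'c : ContDiffOn ℝ 1 (fderiv ℝ f) P := hf.fderiv_of_isOpen hP (by norm_num)
  have hf'cont : ContinuousOn (fderiv ℝ f) P := hf'c.continuousOn
  have hf''cont : ContinuousOn (fderiv ℝ (fderiv ℝ f)) P :=
    hf'c.continuousOn_fderiv_of_isOpen hP (by norm_num)
  have hfcont : ContinuousOn f P := hf.continuousOn
  set M : ℝ := ‖fderiv ℝ (fderiv ℝ f) h₀‖ + 1 with hMdef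
  have hM0 : 0 < M := by positivity
  set ε : ℝ := c^2 / (16 * M) with hεdef
  have hε0 : 0 < ε := by positivity
  -- Step 3 : choose the neighborhood
  have h1 : ∀ᶠ h in nhds h₀, ‖fderiv ℝ f h - T‖ < c/2 := by
    have c1 : ContinuousAt (fun h => ‖fderiv ℝ f h - T‖) h₀ :=
      ((hf'cont.continuousAt (hP.mem_nhds hh₀)).sub continuousAt_const).norm
    have h0 : ‖fderiv ℝ f h₀ - T‖ < c/2 := by
      rw [← hTdef]; simp; positivity
    exact c1 (Iio_mem_nhds h0)
  have h2 : ∀ᶠ h in nhds h₀, ‖fderiv ℝ (fderiv ℝ f) h‖ < M := by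
    have c2 : ContinuousAt (fun h => ‖fderiv ℝ (fderiv ℝ f) h‖) h₀ :=
      ContinuousAt.norm (E := EuclideanSpace ℝ (Fin n) →L[ℝ] EuclideanSpace ℝ (Fin n) →L[ℝ] H)
        (hf''cont.continuousAt (hP.mem_nhds hh₀))
    have h0 : ‖fderiv ℝ (fderiv ℝ f) h₀‖ < M := by rw [hMdef]; linarith
    exact c2 (Iio_mem_nhds h0)
  have h3 : ∀ᶠ h in nhds h₀, ‖f h - f h₀‖ < ε := by
    have c3 : ContinuousAt (fun h => ‖f h - f h₀‖) h₀ :=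
      ((hfcont.continuousAt (hP.mem_nhds hh₀)).sub continuousAt_const).norm
    have h0 : ‖f h₀ - f h₀‖ < ε := by simpa using hε0
    exact c3 (Iio_mem_nhds h0)
  have hev : ∀ᶠ h in nhds h₀, h ∈ P ∧ ‖fderiv ℝ f h - T‖ < c/2 ∧
      ‖fderiv ℝ (fderiv ℝ f) h‖ < M ∧ ‖f h - f h₀‖ < ε := by
    filter_upwards [hP.mem_nhds hh₀, h1, h2, h3] with h hp ha hb hc
    exact ⟨hp, ha, hb, hc⟩
  obtain ⟨δ, hδ0, hδ⟩ := Metric.eventually_nhds_iff_ball.mp hev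
  refine ⟨ε, hε0, Metric.ball h₀ δ, Metric.isOpen_ball, convex_ball h₀ δ,
    fun h hh => (hδ h hh).1, Metric.mem_ball_self hδ0, ?_⟩
  set U := Metric.ball h₀ δ with hUdef
  have hUconv : Convex ℝ U := convex_ball h₀ δ
  have hUopen : IsOpen U := Metric.isOpen_ball
  have hUP : U ⊆ P := fun h hh => (hδ h hh).1
  intro u hu
  set Φ : EuclideanSpace ℝ (Fin n) → ℝ := fun h => (1 / 2 : ℝ) * ‖u - f h‖ ^ 2 with hΦdef
  have key : StrictConvexOn ℝ U Φ := by
    refine ⟨hUconv, ?_⟩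
    rintro x hx y hy hxy a b ha hb hab
    set v := y - x with hv
    have hv0 : v ≠ 0 := sub_ne_zero.mpr (Ne.symm hxy)
    have hvn : 0 < ‖v‖ := norm_pos_iff.mpr hv0
    set γ : ℝ → EuclideanSpace ℝ (Fin n) := fun t => x + t • v with hγ
    have hγc : Continuous γ := by fun_prop
    set O : Set ℝ := γ ⁻¹' U with hO
    have hOopen : IsOpen O := hUopen.preimage hγc
    have hIccO : Icc (0:ℝ) 1 ⊆ O := by
      intro s hs
      have hse : γ s = (1 - s) • x + s • y := by
        simp only [hγ, hv]; module
      show γ s ∈ U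
      rw [hse]
      exact hUconv hx hy (by linarith [hs.1, hs.2]) hs.1 (by ring)
    -- derivative lemmas
    set A : ℝ → H := fun t => fderiv ℝ f (γ t) v with hA
    set G : ℝ → ℝ := fun t => ⟪f (γ t) - u, A t⟫ with hG
    set G2 : ℝ → ℝ := fun t =>
      ⟪f (γ t) - u, (fderiv ℝ (fderiv ℝ f) (γ t) v) v⟫ + ⟪A t, A t⟫ with hG2
    have hγd : ∀ s : ℝ, HasDerivAt γ v s := fun s => by
      simpa [hγ] using ((hasDerivAt_id s).smul_const v).const_add x
    have hγP : ∀ s ∈ O, γ s ∈ P := fun s hs => hUP hs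
    have hFd : ∀ s ∈ O, HasDerivAt (fun t => f (γ t)) (A s) s := by
      intro s hs
      have hfd : DifferentiableAt ℝ f (γ s) :=
        (hf.differentiableOn (by norm_num)).differentiableAt (hP.mem_nhds (hγP s hs))
      exact hfd.hasFDerivAt.comp_hasDerivAt s (hγd s)
    have lemA : ∀ s ∈ O, HasDerivAt (fun t => Φ (γ t)) (G s) s := by
      intro s hs
      have hsub : HasDerivAt (fun t => u - f (γ t)) (0 - A s) s :=
        (hasDerivAt_const s u).sub (hFd s hs)
      have hinner := (HasDerivAt.inner ℝ hsub hsub).const_mul (1/2:ℝ)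
      have heq : (fun t => Φ (γ t))
          = fun t => (1/2:ℝ) * ⟪u - f (γ t), u - f (γ t)⟫ := by
        funext t; rw [hΦdef]; simp only [real_inner_self_eq_norm_sq]
      rw [heq]
      convert hinner using 1
      · rfl
      · rfl
      simp only [hG, inner_sub_left, inner_sub_right, zero_sub, inner_neg_left,
        inner_neg_right, real_inner_comm (f (γ s)) (A s)]
      ring_nf
      rw [real_inner_comm (A s) u]
      ring
    have lemB : ∀ s ∈ O, HasDerivAt G (G2 s) s := by
      intro s hs
      have hf'd : DifferentiableAt ℝ (fderiv ℝ f) (γ s) :=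
        (hf'c.differentiableOn (by norm_num)).differentiableAt (hP.mem_nhds (hγP s hs))
      have h1' : HasDerivAt (fun t => fderiv ℝ f (γ t))
          (fderiv ℝ (fderiv ℝ f) (γ s) v) s :=
        hf'd.hasFDerivAt.comp_hasDerivAt s (hγd s)
      have hAd : HasDerivAt A ((fderiv ℝ (fderiv ℝ f) (γ s) v) v) s := by
        have h2' := (ContinuousLinearMap.apply ℝ H v).hasFDerivAt.comp_hasDerivAt s h1'
        exact h2'
      exact HasDerivAt.inner ℝ ((hFd s hs).sub_const u) hAd
    -- positivity of the second derivative
    have hG2pos : ∀ s ∈ O, 0 < G2 s := by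
      intro s hs
      obtain ⟨hsP, hb1, hb2, hb3⟩ := hδ (γ s) hs
      have hAlow : (c/2) * ‖v‖ ≤ ‖A s‖ := by
        have e1 : c * ‖v‖ ≤ ‖T v‖ := hTlow v
        have e2 : ‖T v - A s‖ ≤ (c/2) * ‖v‖ := by
          have e3 : ‖T v - A s‖ = ‖(T - fderiv ℝ f (γ s)) v‖ := by
            simp [ContinuousLinearMap.sub_apply, hA]
          rw [e3]
          calc ‖(T - fderiv ℝ f (γ s)) v‖ ≤ ‖T - fderiv ℝ f (γ s)‖ * ‖v‖ :=
                (T - fderiv ℝ f (γ s)).le_opNorm v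
            _ ≤ (c/2) * ‖v‖ := by
                have : ‖T - fderiv ℝ f (γ s)‖ ≤ c/2 := by
                  rw [norm_sub_rev]; exact hb1.le
                exact mul_le_mul_of_nonneg_right this (norm_nonneg v)
        have e4 : ‖T v‖ - ‖T v - A s‖ ≤ ‖A s‖ := by
          have := norm_sub_norm_le (T v) (T v - A s)
          simpa using this
        linarith
      have hfu : ‖f (γ s) - u‖ ≤ 2*ε := by
        have t1 : ‖f (γ s) - u‖ ≤ ‖f (γ s) - f h₀‖ + ‖f h₀ - u‖ :=
          norm_sub_le_norm_sub_add_norm_sub _ _ _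
        have t2 : ‖f h₀ - u‖ < ε := by rwa [norm_sub_rev]
        linarith
      have hBn : ‖(fderiv ℝ (fderiv ℝ f) (γ s) v) v‖ ≤ M * (‖v‖ * ‖v‖) := by
        calc ‖(fderiv ℝ (fderiv ℝ f) (γ s) v) v‖
            ≤ ‖fderiv ℝ (fderiv ℝ f) (γ s) v‖ * ‖v‖ :=
              ContinuousLinearMap.le_opNorm _ v
          _ ≤ (‖fderiv ℝ (fderiv ℝ f) (γ s)‖ * ‖v‖) * ‖v‖ :=
              mul_le_mul_of_nonneg_right
                (ContinuousLinearMap.le_opNorm _ v) (norm_nonneg v)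
          _ ≤ M * (‖v‖ * ‖v‖) := by
              rw [mul_assoc]
              exact mul_le_mul_of_nonneg_right hb2.le (by positivity)
      have hip : -(‖f (γ s) - u‖ * ‖(fderiv ℝ (fderiv ℝ f) (γ s) v) v‖)
          ≤ ⟪f (γ s) - u, (fderiv ℝ (fderiv ℝ f) (γ s) v) v⟫ := by
        have := abs_real_inner_le_norm (f (γ s) - u) ((fderiv ℝ (fderiv ℝ f) (γ s) v) v)
        have := neg_abs_le (⟪f (γ s) - u, (fderiv ℝ (fderiv ℝ f) (γ s) v) v⟫)
        linarith
      have hAA : ((c/2) * ‖v‖)^2 ≤ ⟪A s, A s⟫ := by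
        rw [real_inner_self_eq_norm_sq]
        apply pow_le_pow_left₀ (by positivity) hAlow
      have hprod : ‖f (γ s) - u‖ * ‖(fderiv ℝ (fderiv ℝ f) (γ s) v) v‖
          ≤ (2*ε) * (M * (‖v‖ * ‖v‖)) :=
        mul_le_mul hfu hBn (norm_nonneg _) (by positivity)
      have hεM : (2*ε) * (M * (‖v‖ * ‖v‖)) = c^2/8 * (‖v‖ * ‖v‖) := by
        rw [hεdef]; field_simp; ring
      have hpos8 : 0 < c^2/8 * (‖v‖ * ‖v‖) := by positivity
      have e5 : ((c/2) * ‖v‖)^2 = c^2/4 * (‖v‖*‖v‖) := by ring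
      have q1 : ‖f (γ s) - u‖ * ‖(fderiv ℝ (fderiv ℝ f) (γ s) v) v‖
          ≤ c^2/8 * (‖v‖ * ‖v‖) := hεM ▸ hprod
      have q2 : -(c^2/8 * (‖v‖ * ‖v‖))
          ≤ ⟪f (γ s) - u, (fderiv ℝ (fderiv ℝ f) (γ s) v) v⟫ :=
        le_trans (neg_le_neg q1) hip
      have q3 : c^2/4 * (‖v‖ * ‖v‖) ≤ ⟪A s, A s⟫ := e5 ▸ hAA
      have q4 : -(c^2/8 * (‖v‖ * ‖v‖)) + c^2/4 * (‖v‖ * ‖v‖)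
          ≤ ⟪f (γ s) - u, (fderiv ℝ (fderiv ℝ f) (γ s) v) v⟫ + ⟪A s, A s⟫ :=
        add_le_add q2 q3
      have q5 : -(c^2/8*(‖v‖*‖v‖)) + c^2/4*(‖v‖*‖v‖) = c^2/8*(‖v‖*‖v‖) := by ring
      rw [hG2]
      exact lt_of_lt_of_le hpos8 (q5 ▸ q4)
    -- strict convexity of the restriction to the segment
    have hgsc : StrictConvexOn ℝ (Icc (0:ℝ) 1) (fun t => Φ (γ t)) := by
      apply strictConvexOn_of_deriv2_pos (convex_Icc 0 1)
      · intro s hs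
        exact ((lemA s (hIccO hs)).continuousAt).continuousWithinAt
      · intro s hs
        rw [interior_Icc] at hs
        have hsO : s ∈ O := hIccO (Ioo_subset_Icc_self hs)
        have hd1 : deriv (fun t => Φ (γ t)) =ᶠ[nhds s] G := by
          filter_upwards [hOopen.mem_nhds hsO] with t ht using (lemA t ht).deriv
        have : deriv^[2] (fun t => Φ (γ t)) s = G2 s := by
          simp only [Function.iterate_succ, Function.iterate_zero, Function.comp_apply,
            id_eq]
          rw [hd1.deriv_eq]
          exact (lemB s hsO).deriv
        rw [this]
        exact hG2pos s hsO
    -- transfer back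
    have hb' : a = 1 - b := by linarith
    have e0 : γ 0 = x := by simp [hγ]
    have e1 : γ 1 = y := by simp [hγ, hv]
    have eb : γ b = a • x + b • y := by
      rw [hγ, hv, hb']; module
    have := hgsc.2 (left_mem_Icc.mpr zero_le_one) (right_mem_Icc.mpr zero_le_one)
      (by norm_num) ha hb hab
    simp only [smul_eq_mul, mul_zero, mul_one, zero_add] at this
    rw [e0, e1, eb] at this
    simpa [smul_eq_mul] using this
  refine ⟨key, ?_⟩
  intro h₁ hh₁ h₂ hh₂ m₁ m₂
  by_contra hne
  have M1 : IsMinOn Φ U h₁ := IsMinOn.of_isLocalMinOn_of_convexOn hh₁ m₁ key.convexOn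
  have M2 : IsMinOn Φ U h₂ := IsMinOn.of_isLocalMinOn_of_convexOn hh₂ m₂ key.convexOn
  set z := (1/2:ℝ) • h₁ + (1/2:ℝ) • h₂ with hz
  have hzU : z ∈ U := hUconv hh₁ hh₂ (by norm_num) (by norm_num) (by norm_num)
  have hlt := key.2 hh₁ hh₂ hne (by norm_num : (0:ℝ) < 1/2) (by norm_num : (0:ℝ) < 1/2)
    (by norm_num)
  have l1 : Φ h₁ ≤ Φ z := M1 hzU
  have l2 : Φ h₂ ≤ Φ z := M2 hzU
  rw [← hz] at hlt
  simp only [smul_eq_mul] at hlt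
  change Φ z < 1/2 * Φ h₁ + 1/2 * Φ h₂ at hlt
  linarith
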